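/- For every prime power q, setting δ = q² + q + 1, there exists a subset D ⊆ ℤ/δℤ such that the incidence structure with point set ℤ/δℤ and line set ℤ/δℤ, in which a point p is incident to a line l if and only if l − p ∈ D, is a projective plane of order q (any two distinct points lie on a unique common line, any two distinct lines meet in a unique common point, there exist three points and three lines in nondegenerate position, and each line contains exactly q + 1 points). -/

import Mathlib

open Module

set_option maxHeartbeats 1000000 in
set_option synthInstance.maxHeartbeats 400000 in
theorem exists_pds_aux (q : ℕ) (hq2 : 2 ≤ q) (F : Type) [Field F] [Fintype F]
    [DecidableEq F] (K : Subfield F) (h1 : Fintype.card F = q ^ 3)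
    (hKmem : ∀ x : F, x ∈ K ↔ x ^ q = x) :
    ∃ D : Set (ZMod (q^2+q+1)),
      (∀ d : ZMod (q^2+q+1), d ≠ 0 → ∃! b, b ∈ D ∧ b + d ∈ D) ∧ D.ncard = q + 1 := by
  haveI : Fintype Fˣ := Fintype.ofFinite _
  haveI : Fintype K := Fintype.ofFinite _
  haveI : FiniteDimensional K F := Module.Finite.of_finite
  set δ := q^2 + q + 1 with hδdef
  have hδq : δ * (q - 1) = q^3 - 1 := by
    have hone : 1 ≤ q := by omega
    have h3 : 1 ≤ q^3 := Nat.one_le_pow _ _ (by omega)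
    zify [hone, h3]
    rw [hδdef]; push_cast
    ring
  obtain ⟨ζ, hζ⟩ := IsCyclic.exists_generator (α := Fˣ)
  have hord : orderOf ζ = q^3 - 1 := by
    rw [orderOf_eq_card_of_forall_mem_zpowers hζ, Nat.card_units, Nat.card_eq_fintype_card, h1]
  have hgen : ∀ x : F, x ≠ 0 → ∃ i : ℕ, x = (ζ : F) ^ i := by
    intro x hx
    obtain ⟨i, hi⟩ := (isOfFinOrder_of_finite ζ).mem_powers_iff_mem_zpowers.mpr
      (hζ (Units.mk0 x hx))
    exact ⟨i, by
      rw [← Units.val_pow_eq_pow_val, show ζ ^ i = Units.mk0 x hx from hi, Units.val_mk0]⟩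
  set u : Fˣ := ζ ^ δ with hu
  have hδdvd : δ ∣ q^3 - 1 := ⟨q - 1, hδq.symm⟩
  have huord : orderOf u = q - 1 := by
    rw [hu, orderOf_pow' ζ (by positivity), hord, Nat.gcd_eq_right hδdvd,
      ← hδq, Nat.mul_div_cancel_left _ (by positivity)]
  have humem : (u : F) ∈ K := by
    rw [hKmem]
    have h0 : (u : F) ^ (q - 1) = 1 := by
      rw [← Units.val_pow_eq_pow_val, ← huord, pow_orderOf_eq_one, Units.val_one]
    calc (u:F) ^ q = (u:F) ^ (q - 1) * (u:F) := by
          rw [← pow_succ]; congr 1; omega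
      _ = (u : F) := by rw [h0, one_mul]
  have hKchar : ∀ x : F, x ≠ 0 → (x ∈ K ↔ ∃ j : ℕ, x = (u : F) ^ j) := by
    intro x hx
    constructor
    · intro hxK
      obtain ⟨i, hi⟩ := hgen x hx
      rw [hKmem] at hxK
      have hx1 : (ζ:F) ^ (i * (q-1)) = 1 := by
        have hxq : x ^ (q-1) * x = 1 * x := by
          rw [one_mul, ← pow_succ]
          convert hxK using 2; omega
        have hx1' : x ^ (q - 1) = 1 := mul_right_cancel₀ hx hxq
        rw [pow_mul, ← hi, hx1']
      have hζ1 : (ζ : Fˣ) ^ (i * (q-1)) = 1 := by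
        ext
        rw [Units.val_pow_eq_pow_val]
        exact hx1
      have hdvd : (q^3 - 1) ∣ i * (q - 1) := hord ▸ orderOf_dvd_of_pow_eq_one hζ1
      rw [← hδq] at hdvd
      have hdvd2 : δ ∣ i := by
        have hq1 : 0 < q - 1 := by omega
        exact (Nat.mul_dvd_mul_iff_right hq1).mp hdvd
      obtain ⟨j, rfl⟩ := hdvd2
      exact ⟨j, by rw [hi, hu, pow_mul, Units.val_pow_eq_pow_val]⟩
    · rintro ⟨j, rfl⟩
      exact pow_mem humem j
  -- cardinality of K
  have hq1pos : 0 < q - 1 := by omega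
  have hKset : (K : Set F) = ↑(insert (0:F) ((Finset.range (q-1)).image (fun j => (u:F)^j))) := by
    ext x
    simp only [Finset.coe_insert, Finset.coe_image, Finset.coe_range, Set.mem_insert_iff,
      Set.mem_image, Set.mem_Iio, SetLike.mem_coe]
    constructor
    · intro hxK
      rcases eq_or_ne x 0 with rfl | hx
      · exact Or.inl rfl
      · obtain ⟨j, rfl⟩ := (hKchar x hx).mp hxK
        refine Or.inr ⟨j % (q-1), Nat.mod_lt _ hq1pos, ?_⟩
        rw [← Units.val_pow_eq_pow_val, ← Units.val_pow_eq_pow_val]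
        congr 1
        rw [← huord]
        exact pow_mod_orderOf u j
    · rintro (rfl | ⟨j, _, rfl⟩)
      · exact zero_mem K
      · exact pow_mem humem j
  have hcardK : Fintype.card K = q := by
    rw [← Nat.card_eq_fintype_card]
    have h2 : Nat.card K = (K : Set F).ncard := (Nat.card_coe_set_eq _).symm
    rw [h2, hKset, Set.ncard_coe_finset, Finset.card_insert_of_notMem,
      Finset.card_image_of_injOn]
    · rw [Finset.card_range]; omega
    · intro a ha b hb hab
      simp only [Finset.coe_range, Set.mem_Iio] at ha hb
      have huu : (u : Fˣ) ^ a = (u:Fˣ) ^ b := by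
        ext; rw [Units.val_pow_eq_pow_val, Units.val_pow_eq_pow_val]; exact hab
      exact pow_injOn_Iio_orderOf (by rwa [Set.mem_Iio, huord]) (by rwa [Set.mem_Iio, huord]) huu
    · intro h
      simp only [Finset.mem_image, Finset.mem_range] at h
      obtain ⟨j, -, hj⟩ := h
      exact pow_ne_zero j (Units.ne_zero u) hj
  -- finrank
  have h3 : finrank K F = 3 := by
    have hcv := card_eq_pow_finrank (K := K) (V := F)
    rw [hcardK, h1] at hcv
    exact (Nat.pow_right_injective hq2 hcv.symm)
  -- the plane W
  let bF := Module.finBasis K F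
  let v : Fin 2 → F := fun i => bF (Fin.castLE (by omega) i)
  have hvli : LinearIndependent K v :=
    (Module.finBasis K F).linearIndependent.comp _ (Fin.castLE_injective _)
  set W : Submodule K F := Submodule.span K (Set.range v) with hW
  have hWrank : finrank K W = 2 := by
    rw [hW, finrank_span_eq_card hvli, Fintype.card_fin]
  -- stabilizer
  have hW_stab : ∀ x : F, (∀ w ∈ W, x * w ∈ W) → x ∈ K := by
    intro x hx
    by_contra hxK
    have hint : IsIntegral K x := IsIntegral.of_finite K x
    have hdvd : (minpoly K x).natDegree ∣ 3 := h3 ▸ minpoly.degree_dvd hint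
    have hne1 : (minpoly K x).natDegree ≠ 1 := by
      intro hdeg
      have hdeg1 : (minpoly K x).degree = 1 := by
        have h' := (Polynomial.degree_eq_iff_natDegree_eq (minpoly.ne_zero hint)).mpr hdeg
        simpa using h'
      obtain ⟨c, hc⟩ := minpoly.degree_eq_one_iff.mp hdeg1
      exact hxK (hc ▸ c.2)
    have hdeg3 : (minpoly K x).natDegree = 3 := by
      rcases (Nat.prime_three).eq_one_or_self_of_dvd _ hdvd with h | h
      · exact absurd h hne1
      · exact h
    have hadj : Subalgebra.toSubmodule (Algebra.adjoin K ({x} : Set F)) = ⊤ := by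
      apply Submodule.eq_top_of_finrank_eq
      rw [h3]
      rw [show finrank K (Subalgebra.toSubmodule (Algebra.adjoin K ({x} : Set F)))
          = finrank K (Algebra.adjoin K ({x} : Set F)) from rfl]
      rw [PowerBasis.finrank (Algebra.adjoin.powerBasis hint), Algebra.adjoin.powerBasis_dim,
        hdeg3]
    have hmul : ∀ y : F, ∀ w ∈ W, y * w ∈ W := by
      intro y
      have hy : y ∈ Algebra.adjoin K ({x} : Set F) := by
        rw [← Subalgebra.mem_toSubmodule, hadj]; trivial
      induction hy using Algebra.adjoin_induction with
      | mem z hz => rw [Set.mem_singleton_iff] at hz; subst hz; exact hx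
      | algebraMap c =>
        intro w hw
        have := W.smul_mem c hw
        rwa [Algebra.smul_def] at this
      | add y z _ _ hy hz =>
        intro w hw
        rw [add_mul]
        exact W.add_mem (hy w hw) (hz w hw)
      | mul y z _ _ hy hz =>
        intro w hw
        rw [mul_assoc]
        exact hy _ (hz w hw)
    have hWbot : W ≠ ⊥ := by
      intro hbot
      rw [hbot, finrank_bot] at hWrank
      omega
    obtain ⟨w₀, hw₀W, hw₀⟩ := Submodule.exists_mem_ne_zero_of_ne_bot hWbot
    have hWtop : W = ⊤ := by
      rw [Submodule.eq_top_iff']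
      intro y
      have := hmul (y * w₀⁻¹) w₀ hw₀W
      rwa [mul_assoc, inv_mul_cancel₀ hw₀, mul_one] at this
    rw [hWtop, finrank_top, h3] at hWrank
    omega
  classical
  haveI : NeZero δ := ⟨by omega⟩
  -- the difference set
  set D : Set (ZMod δ) := {i : ZMod δ | (ζ : F) ^ i.val ∈ W} with hD
  -- translation invariance
  have h_up : ∀ (m k : ℕ), (ζ:F) ^ m ∈ W → (ζ:F) ^ (m + δ * k) ∈ W := by
    intro m k hm
    have hc : ((u:F) ^ k) ∈ K := pow_mem humem k
    have h2 := W.smul_mem (⟨(u:F)^k, hc⟩ : K) hm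
    rw [pow_add, pow_mul]
    have : (ζ:F) ^ δ = (u : F) := by rw [hu, Units.val_pow_eq_pow_val]
    rw [this, mul_comm]
    convert h2 using 1
    rfl
  have h_down : ∀ (m k : ℕ), (ζ:F) ^ (m + δ * k) ∈ W → (ζ:F) ^ m ∈ W := by
    intro m k hm
    have h2 := h_up _ (k * (q - 2)) hm
    have he : m + δ * k + δ * (k * (q - 2)) = m + (δ * (q-1)) * k := by
      have : k + k * (q-2) = k * (q-1) := by
        have : 1 + (q - 2) = q - 1 := by omega
        calc k + k * (q-2) = k * (1 + (q-2)) := by ring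
          _ = k * (q-1) := by rw [this]
      calc m + δ * k + δ * (k * (q - 2)) = m + δ * (k + k * (q-2)) := by ring
        _ = m + δ * (k * (q-1)) := by rw [this]
        _ = m + (δ * (q-1)) * k := by ring
    rw [he, hδq] at h2
    have hζ1 : (ζ:F) ^ (q^3-1) = 1 := by
      rw [← hord, ← Units.val_pow_eq_pow_val, pow_orderOf_eq_one, Units.val_one]
    rwa [pow_add, pow_mul, hζ1, one_pow, mul_one] at h2
  have hT : ∀ m m' : ℕ, m % δ = m' % δ → ((ζ:F) ^ m ∈ W ↔ (ζ:F) ^ m' ∈ W) := by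
    intro m m' hmm
    have key : ∀ a b : ℕ, a % δ = b % δ → (ζ:F) ^ a ∈ W → (ζ:F) ^ b ∈ W := by
      intro a b hab ha
      have h2 := h_up a (b / δ) ha
      have he : a + δ * (b / δ) = b + δ * (a / δ) := by
        have h3 := Nat.div_add_mod a δ
        have h4 := Nat.div_add_mod b δ
        omega
      rw [he] at h2
      exact h_down b (a / δ) h2
    exact ⟨key m m' hmm, key m' m hmm.symm⟩
  have hDmem : ∀ m : ℕ, ((m : ZMod δ) ∈ D) ↔ (ζ:F) ^ m ∈ W := by
    intro m
    rw [hD, Set.mem_setOf_eq, ZMod.val_natCast]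
    exact hT _ _ (Nat.mod_mod_of_dvd m dvd_rfl)
  have hvalcast : ∀ b : ZMod δ, ((b.val : ℕ) : ZMod δ) = b := fun b => ZMod.natCast_rightInverse b
  -- the core property
  have hcore : ∀ d : ZMod δ, d ≠ 0 → ∃! b : ZMod δ, b ∈ D ∧ b + d ∈ D := by
    intro d hd
    set a : F := (ζ : F) ^ d.val with ha
    have ha0 : a ≠ 0 := pow_ne_zero _ (Units.ne_zero ζ)
    let e : F ≃ₗ[K] F := LinearEquiv.ofLinear (LinearMap.mulLeft K a)
      (LinearMap.mulLeft K a⁻¹)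
      (by ext y; simp only [LinearMap.coe_comp, Function.comp_apply, LinearMap.mulLeft_apply,
        LinearMap.id_coe, id_eq]; rw [← mul_assoc, mul_inv_cancel₀ ha0, one_mul])
      (by ext y; simp only [LinearMap.coe_comp, Function.comp_apply, LinearMap.mulLeft_apply,
        LinearMap.id_coe, id_eq]; rw [← mul_assoc, inv_mul_cancel₀ ha0, one_mul])
    set W' : Submodule K F := W.comap (e : F →ₗ[K] F) with hW'def
    have hW'mem : ∀ x : F, x ∈ W' ↔ a * x ∈ W := fun x => Iff.rfl
    have hW'rank : finrank K W' = 2 := by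
      rw [hW'def, Submodule.comap_equiv_eq_map_symm, LinearEquiv.finrank_map_eq, hWrank]
    -- intersection has rank exactly 1
    have hsum := Submodule.finrank_sup_add_finrank_inf_eq W W'
    have hsup : finrank K ↥(W ⊔ W') ≤ 3 := h3 ▸ Submodule.finrank_le _
    have hint1 : 1 ≤ finrank K ↥(W ⊓ W') := by omega
    have hintle : finrank K ↥(W ⊓ W') ≤ 1 := by
      by_contra hcon
      push_neg at hcon
      have heq : W ⊓ W' = W := by
        apply Submodule.eq_of_le_of_finrank_le inf_le_left
        omega
      have hWle : W ≤ W' := by rw [← heq]; exact inf_le_right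
      have haK : a ∈ K := hW_stab a (fun w hw => (hW'mem w).mp (hWle hw))
      obtain ⟨j, hj⟩ := (hKchar a ha0).mp haK
      have hζeq : (ζ : Fˣ) ^ d.val = ζ ^ (δ * j) := by
        ext
        rw [Units.val_pow_eq_pow_val, Units.val_pow_eq_pow_val, ← ha, pow_mul]
        rw [hj]
        congr 1
      have hmod : d.val ≡ δ * j [MOD q^3 - 1] := by
        rw [← hord]
        exact pow_eq_pow_iff_modEq.mp hζeq
      have hmodδ : d.val ≡ 0 [MOD δ] := by
        have := Nat.ModEq.of_dvd hδdvd hmod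
        simpa [Nat.ModEq, Nat.mul_mod_right] using this
      apply hd
      have : ((d.val : ℕ) : ZMod δ) = ((0 : ℕ) : ZMod δ) := (ZMod.natCast_eq_natCast_iff _ _ _).mpr hmodδ
      rwa [hvalcast, Nat.cast_zero] at this
    have hint_rank : finrank K ↥(W ⊓ W') = 1 := le_antisymm hintle hint1
    -- existence
    have hbot : W ⊓ W' ≠ ⊥ := by
      intro hbot
      rw [hbot, finrank_bot] at hint_rank
      omega
    obtain ⟨x₀, hx₀mem, hx₀⟩ := Submodule.exists_mem_ne_zero_of_ne_bot hbot
    obtain ⟨i, hi⟩ := hgen x₀ hx₀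
    -- canonical membership facts
    have hmemD : ∀ (b : ZMod δ), (b ∈ D ∧ b + d ∈ D) ↔
        ((ζ:F) ^ b.val ∈ W ∧ (ζ:F) ^ b.val ∈ W') := by
      intro b
      have h1' : b ∈ D ↔ (ζ:F) ^ b.val ∈ W := by
        rw [← hvalcast b, hDmem, hvalcast b]
      have h2' : b + d ∈ D ↔ (ζ:F) ^ b.val ∈ W' := by
        have hbd : b + d = ((b.val + d.val : ℕ) : ZMod δ) := by
          push_cast
          rw [hvalcast, hvalcast]
        rw [hbd, hDmem, hW'mem, ha, ← pow_add]
        exact hT _ _ (by rw [Nat.add_comm])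
      rw [h1', h2']
    have hbase : ((i : ZMod δ) ∈ D ∧ (i : ZMod δ) + d ∈ D) := by
      rw [hmemD]
      constructor
      · have hWi : (ζ:F) ^ i ∈ W := by rw [← hi]; exact hx₀mem.1
        rw [ZMod.val_natCast]
        exact (hT _ _ (Nat.mod_mod_of_dvd i dvd_rfl).symm).mp hWi
      · have hWi' : (ζ:F) ^ i ∈ W' := by rw [← hi]; exact hx₀mem.2
        rw [ZMod.val_natCast]
        rw [hW'mem] at hWi' ⊢
        have h6 : a * (ζ:F)^i = (ζ:F)^(d.val + i) := by rw [ha, pow_add]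
        have h7 : a * (ζ:F)^(i % δ) = (ζ:F)^(d.val + i % δ) := by rw [ha, pow_add]
        rw [h6] at hWi'
        rw [h7]
        exact (hT _ _ (Nat.ModEq.add_left d.val ((Nat.mod_modEq i δ).symm))).mp hWi'
    refine ⟨(i : ZMod δ), hbase, ?_⟩
    intro b₂ hb₂
    set B : ℕ := (i : ZMod δ).val with hB
    set A : ℕ := b₂.val with hA
    have hxA : (ζ:F) ^ A ∈ W ⊓ W' := by
      have := (hmemD b₂).mp hb₂
      exact Submodule.mem_inf.mpr this
    have hxB : (ζ:F) ^ B ∈ W ⊓ W' := by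
      have := (hmemD ((i : ZMod δ))).mp hbase
      exact Submodule.mem_inf.mpr this
    have hxB0 : (ζ:F) ^ B ≠ 0 := pow_ne_zero _ (Units.ne_zero ζ)
    have hspan : Submodule.span K {(ζ:F) ^ B} = W ⊓ W' := by
      apply Submodule.eq_of_le_of_finrank_le
      · rw [Submodule.span_le, Set.singleton_subset_iff]
        exact hxB
      · rw [hint_rank, finrank_span_singleton hxB0]
    obtain ⟨c, hc⟩ := Submodule.mem_span_singleton.mp (hspan ▸ hxA)
    have hc0 : c ≠ 0 := by
      intro h
      rw [h, zero_smul] at hc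
      exact pow_ne_zero _ (Units.ne_zero ζ) hc.symm
    have hcF : (c : F) ≠ 0 := by
      simpa using hc0
    obtain ⟨j, hj⟩ := (hKchar (c : F) hcF).mp c.2
    have hmul : (c : F) * (ζ:F) ^ B = (ζ:F) ^ A := by
      rw [← hc, Algebra.smul_def]
      rfl
    have hpow : (ζ:F) ^ (δ * j + B) = (ζ:F) ^ A := by
      rw [pow_add, pow_mul]
      rw [show ((ζ:F) ^ δ) = (u : F) by rw [hu, Units.val_pow_eq_pow_val], ← hj]
      exact hmul
    have hζeq : (ζ : Fˣ) ^ (δ * j + B) = ζ ^ A := by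
      ext
      rw [Units.val_pow_eq_pow_val, Units.val_pow_eq_pow_val]
      exact hpow
    have hmod : (δ * j + B) ≡ A [MOD q ^ 3 - 1] := by
      rw [← hord]
      exact pow_eq_pow_iff_modEq.mp hζeq
    have hmodδ : B ≡ A [MOD δ] := by
      have h8 := Nat.ModEq.of_dvd hδdvd hmod
      have h9 : (δ * j + B) ≡ B [MOD δ] := by
        simpa using (Nat.ModEq.add_right B (Nat.modEq_zero_iff_dvd.mpr ⟨j, rfl⟩))
      exact h9.symm.trans h8
    have := (ZMod.natCast_eq_natCast_iff _ _ _).mpr hmodδ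
    rw [hvalcast, hvalcast] at this
    exact this.symm
  -- counting: |D| = q + 1
  have hfin : D.Finite := Set.toFinite D
  set Df : Finset (ZMod δ) := hfin.toFinset with hDf
  have hmemDf : ∀ x, x ∈ Df ↔ x ∈ D := fun x => hfin.mem_toFinset
  have hfib0 : ((Df ×ˢ Df).filter (fun x => x.1 - x.2 = 0)).card = Df.card := by
    have himg : (Df ×ˢ Df).filter (fun x => x.1 - x.2 = (0:ZMod δ))
        = Df.image (fun a => (a, a)) := by
      ext ⟨x, y⟩
      simp only [Finset.mem_filter, Finset.mem_product, Finset.mem_image, sub_eq_zero,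
        Prod.mk.injEq]
      constructor
      · rintro ⟨⟨hx, hy⟩, rfl⟩
        exact ⟨x, hx, rfl, rfl⟩
      · rintro ⟨a, ha, rfl, rfl⟩
        exact ⟨⟨ha, ha⟩, rfl⟩
    rw [himg, Finset.card_image_of_injective]
    intro a b h
    exact (Prod.mk.injEq _ _ _ _).mp h |>.1
  have hfib1 : ∀ d : ZMod δ, d ≠ 0 →
      ((Df ×ˢ Df).filter (fun x => x.1 - x.2 = d)).card = 1 := by
    intro d hd
    obtain ⟨b, hb, hbu⟩ := hcore d hd
    rw [Finset.card_eq_one]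
    refine ⟨(b + d, b), ?_⟩
    ext ⟨x, y⟩
    simp only [Finset.mem_filter, Finset.mem_product, Finset.mem_singleton, hmemDf,
      Prod.mk.injEq]
    constructor
    · rintro ⟨⟨hx, hy⟩, hxy⟩
      have hyb : y = b := hbu y ⟨hy, by rw [show y + d = x by rw [← hxy]; ring]; exact hx⟩
      refine ⟨?_, hyb⟩
      rw [← hxy, hyb]
      ring
    · rintro ⟨rfl, rfl⟩
      exact ⟨⟨hb.2, hb.1⟩, by ring⟩
  have hcount : Df.card * Df.card = Df.card + (δ - 1) := by
    have hfibtot := Finset.card_eq_sum_card_fiberwise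
      (f := fun x : ZMod δ × ZMod δ => x.1 - x.2) (s := Df ×ˢ Df) (t := Finset.univ)
      (fun x _ => Finset.mem_univ _)
    rw [Finset.card_product] at hfibtot
    rw [hfibtot, ← Finset.add_sum_erase _ _ (Finset.mem_univ (0 : ZMod δ)), hfib0]
    congr 1
    rw [Finset.sum_congr rfl (fun d hd => hfib1 d (Finset.ne_of_mem_erase hd))]
    rw [Finset.sum_const, smul_eq_mul, mul_one, Finset.card_erase_of_mem (Finset.mem_univ _),
      Finset.card_univ, ZMod.card]
  have hNcard : D.ncard = Df.card := Set.ncard_eq_toFinset_card D hfin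
  have hN : D.ncard = q + 1 := by
    rw [hNcard]
    set N := Df.card with hNd
    have hδ1 : δ - 1 = q^2 + q := by omega
    rw [hδ1] at hcount
    by_contra hne
    rcases Nat.lt_or_ge N (q+1) with hlt | hge
    · have h1' : N * N ≤ N * q := Nat.mul_le_mul_left N (by omega)
      have h2' : N * q ≤ q * q := Nat.mul_le_mul_right q (by omega)
      have h3' : q * q = q^2 := (sq q).symm
      omega
    · have hge2 : q + 2 ≤ N := by omega
      have h1' : (q+2) * N ≤ N * N := Nat.mul_le_mul_right N hge2
      have e1 : (q+2) * N = q * N + 2 * N := by ring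
      have e2 : q * (q+2) ≤ q * N := Nat.mul_le_mul_left q hge2
      have e3 : q * (q+2) = q^2 + 2*q := by ring
      omega
  exact ⟨D, hcore, hN⟩

theorem exists_pds (q : ℕ) (hq : IsPrimePow q) :
    ∃ D : Set (ZMod (q^2+q+1)),
      (∀ d : ZMod (q^2+q+1), d ≠ 0 → ∃! b, b ∈ D ∧ b + d ∈ D) ∧ D.ncard = q + 1 := by
  obtain ⟨p, n, hpp, hn, rfl⟩ := hq
  haveI : Fact p.Prime := ⟨Nat.prime_iff.mpr hpp⟩
  have hq2 : 2 ≤ p ^ n := Nat.one_lt_pow (by omega) (Nat.prime_iff.mpr hpp).two_le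
  set F := GaloisField p (3*n) with hF
  haveI : Fintype F := Fintype.ofFinite F
  haveI : DecidableEq F := Classical.decEq F
  have h1 : Fintype.card F = (p ^ n) ^ 3 := by
    have := GaloisField.card p (3*n) (by omega)
    rw [Nat.card_eq_fintype_card] at this
    rw [this, ← pow_mul, Nat.mul_comm]
  set φ : F →+* F := iterateFrobenius F p n with hφ
  have hφx : ∀ x : F, φ x = x ^ (p ^ n) := fun x => by simp [hφ, iterateFrobenius_def]
  set K : Subfield F := {
    carrier := {x | φ x = x}
    mul_mem' := by intro a b ha hb; simp only [Set.mem_setOf_eq, map_mul] at *; rw [ha, hb]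
    one_mem' := by simp
    add_mem' := by intro a b ha hb; simp only [Set.mem_setOf_eq, map_add] at *; rw [ha, hb]
    zero_mem' := by simp
    neg_mem' := by intro a ha; simp only [Set.mem_setOf_eq, map_neg] at *; rw [ha]
    inv_mem' := by intro a ha; simp only [Set.mem_setOf_eq, map_inv₀] at *; rw [ha]
  } with hK
  have hKmem : ∀ x : F, x ∈ K ↔ x ^ (p^n) = x := fun x => by
    show φ x = x ↔ _; rw [hφx]
  exact exists_pds_aux (p ^ n) hq2 F K h1 hKmem



/-- for every prime power `q`, with `δ = q² + q + 1`, there is a subset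
`D ⊆ ℤ/δℤ` such that the incidence structure with points `ℤ/δℤ`, lines `ℤ/δℤ`, and point
`p` incident to line `l` iff `l - p ∈ D`, is a projective plane of order `q`: two
distinct points lie on a unique common line, two distinct lines meet in a unique point,
there is a nondegenerate configuration of three points and three lines, and each line
contains exactly `q + 1` points. -/
theorem singer_plane_exists (q : ℕ) (hq : IsPrimePow q) :
    ∃ D : Set (ZMod (q ^ 2 + q + 1)),
      -- any two distinct points lie on a unique common line
      (∀ p p' : ZMod (q ^ 2 + q + 1), p ≠ p' →
        ∃! l : ZMod (q ^ 2 + q + 1), l - p ∈ D ∧ l - p' ∈ D) ∧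
      -- any two distinct lines meet in a unique common point
      (∀ l l' : ZMod (q ^ 2 + q + 1), l ≠ l' →
        ∃! p : ZMod (q ^ 2 + q + 1), l - p ∈ D ∧ l' - p ∈ D) ∧
      -- three points and three lines in nondegenerate position
      (∃ p₁ p₂ p₃ l₁ l₂ l₃ : ZMod (q ^ 2 + q + 1),
        l₂ - p₁ ∉ D ∧ l₃ - p₁ ∉ D ∧
        l₁ - p₂ ∉ D ∧ l₂ - p₂ ∈ D ∧ l₃ - p₂ ∈ D ∧
        l₁ - p₃ ∉ D ∧ l₂ - p₃ ∈ D ∧ l₃ - p₃ ∉ D) ∧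
      -- each line contains exactly `q + 1` points
      (∀ l : ZMod (q ^ 2 + q + 1), {p : ZMod (q ^ 2 + q + 1) | l - p ∈ D}.ncard = q + 1) := by

  obtain ⟨D, hcore, hN⟩ := exists_pds q hq
  have hq2 : 2 ≤ q := hq.two_le
  haveI : NeZero (q^2+q+1) := ⟨by positivity⟩
  -- each line has q+1 points
  have hlinecount : ∀ l : ZMod (q^2+q+1), {x : ZMod (q^2+q+1) | l - x ∈ D}.ncard = q + 1 := by
    intro l
    have himg : {x : ZMod (q^2+q+1) | l - x ∈ D} = (fun d => l - d) '' D := by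
      ext x
      simp only [Set.mem_setOf_eq, Set.mem_image]
      constructor
      · intro hx; exact ⟨l - x, hx, by ring⟩
      · rintro ⟨d, hd, rfl⟩
        rw [show l - (l - d) = d by ring]
        exact hd
    rw [himg, Set.ncard_image_of_injective _ (fun x y h => by rwa [sub_right_inj] at h), hN]
  -- each point has q+1 lines
  have hpointcount : ∀ P : ZMod (q^2+q+1), {l : ZMod (q^2+q+1) | l - P ∈ D}.ncard = q + 1 := by
    intro P
    have himg : {l : ZMod (q^2+q+1) | l - P ∈ D} = (fun d => d + P) '' D := by
      ext x
      simp only [Set.mem_setOf_eq, Set.mem_image]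
      constructor
      · intro hx; exact ⟨x - P, hx, by ring⟩
      · rintro ⟨d, hd, rfl⟩
        rw [show d + P - P = d by ring]
        exact hd
    rw [himg, Set.ncard_image_of_injective _ (fun x y h => by rwa [add_left_inj] at h), hN]
  -- axiom 1
  have hax1 : ∀ P P' : ZMod (q ^ 2 + q + 1), P ≠ P' →
      ∃! l : ZMod (q ^ 2 + q + 1), l - P ∈ D ∧ l - P' ∈ D := by
    intro P P' hne
    obtain ⟨b, ⟨hb1, hb2⟩, hbu⟩ := hcore (P - P') (sub_ne_zero_of_ne hne)
    refine ⟨b + P, ⟨?_, ?_⟩, ?_⟩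
    · rw [show b + P - P = b by ring]; exact hb1
    · rw [show b + P - P' = b + (P - P') by ring]; exact hb2
    · intro l ⟨h1, h2⟩
      have hl : l - P = b := by
        apply hbu
        refine ⟨h1, ?_⟩
        rw [show l - P + (P - P') = l - P' by ring]
        exact h2
      rw [← hl]; ring
  -- axiom 2
  have hax2 : ∀ l l' : ZMod (q ^ 2 + q + 1), l ≠ l' →
      ∃! P : ZMod (q ^ 2 + q + 1), l - P ∈ D ∧ l' - P ∈ D := by
    intro l l' hne
    obtain ⟨b, ⟨hb1, hb2⟩, hbu⟩ := hcore (l - l') (sub_ne_zero_of_ne hne)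
    refine ⟨l' - b, ⟨?_, ?_⟩, ?_⟩
    · rw [show l - (l' - b) = b + (l - l') by ring]; exact hb2
    · rw [show l' - (l' - b) = b by ring]; exact hb1
    · intro P ⟨h1, h2⟩
      have hl : l' - P = b := by
        apply hbu
        refine ⟨h2, ?_⟩
        rw [show l' - P + (l - l') = l - P by ring]
        exact h1
      rw [← hl]; ring
  -- two distinct elements of D
  have h2D : 1 < D.ncard := by omega
  obtain ⟨a, b, ha, hb, hab⟩ := (Set.one_lt_ncard_iff (Set.toFinite D)).mp h2D
  -- avoidance
  have havoid : ∀ A B : Set (ZMod (q^2+q+1)), A.ncard = q+1 → B.ncard = q+1 →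
      ∃ z, z ∉ A ∧ z ∉ B := by
    intro A B hA hB
    by_contra h
    push_neg at h
    have huniv : (Set.univ : Set (ZMod (q^2+q+1))) ⊆ A ∪ B := fun z _ => by
      by_cases hz : z ∈ A
      · exact Or.inl hz
      · exact Or.inr (h z hz)
    have h1 : (Set.univ : Set (ZMod (q^2+q+1))).ncard ≤ (A ∪ B).ncard :=
      Set.ncard_le_ncard huniv (Set.toFinite _)
    rw [Set.ncard_univ, Nat.card_eq_fintype_card, ZMod.card] at h1
    have h2 : (A ∪ B).ncard ≤ A.ncard + B.ncard := Set.ncard_union_le A B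
    have h3 : 2 * q ≤ q * q := Nat.mul_le_mul_right q hq2
    have h4 : q * q = q^2 := (sq q).symm
    omega
  obtain ⟨p₁, hp₁a, hp₁b⟩ := havoid {x | a - x ∈ D} {x | b - x ∈ D}
    (hlinecount a) (hlinecount b)
  obtain ⟨l₁, hl₁a, hl₁b⟩ := havoid {l | l - 0 ∈ D} {l | l - (a - b) ∈ D}
    (hpointcount 0) (hpointcount (a - b))
  have hp₃ne : (0 : ZMod (q^2+q+1)) ≠ a - b := by
    intro h
    exact hab (by rw [← sub_eq_zero, ← h])
  have hl₃p₃ : b - (a - b) ∉ D := by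
    intro hin
    obtain ⟨l, hl, hlu⟩ := hax1 0 (a - b) hp₃ne
    have hea : a = l := hlu a ⟨by rw [sub_zero]; exact ha, by rw [show a - (a - b) = b by ring]; exact hb⟩
    have heb : b = l := hlu b ⟨by rw [sub_zero]; exact hb, hin⟩
    exact hab (hea.trans heb.symm)
  refine ⟨D, hax1, hax2, ⟨p₁, 0, a - b, l₁, a, b, hp₁a, hp₁b, ?_, ?_, ?_, hl₁b, ?_, hl₃p₃⟩,
    hlinecount⟩
  · exact hl₁a
  · rw [sub_zero]; exact ha
  · rw [sub_zero]; exact hb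
  · rw [show a - (a - b) = b by ring]; exact hb
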